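/- For every real number r and every natural number n ≥ 2, R_n(r) = (2n - 1) · R_{n-1}(r) - r^2 · R_{n-2}(r). -/

import Mathlib

open MeasureTheory intervalIntegral

/-- Hermite's integral `R_n(r) = ∫_0^r ((r² - x²)ⁿ / (2ⁿ n!)) cos x dx`. -/
noncomputable def R (n : ℕ) (r : ℝ) : ℝ :=
  ∫ x in (0:ℝ)..r, ((r ^ 2 - x ^ 2) ^ n / (2 ^ n * n.factorial)) * Real.cos x

theorem R_recurrence (r : ℝ) (n : ℕ) (hn : 2 ≤ n) :
    R n r = (2 * (n : ℝ) - 1) * R (n - 1) r - r ^ 2 * R (n - 2) r := by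
  obtain ⟨m, rfl⟩ : ∃ m, n = m + 2 := ⟨n - 2, by omega⟩
  have h1 : m + 2 - 1 = m + 1 := rfl
  have h2 : m + 2 - 2 = m := rfl
  rw [h1, h2]
  set c : ℝ := 2 * ((m : ℝ) + 2) - 1 with hc
  -- integrands
  set f2 : ℝ → ℝ := fun x => (r ^ 2 - x ^ 2) ^ (m + 2) / (2 ^ (m + 2) * (m + 2).factorial) * Real.cos x with hf2
  set f1 : ℝ → ℝ := fun x => (r ^ 2 - x ^ 2) ^ (m + 1) / (2 ^ (m + 1) * (m + 1).factorial) * Real.cos x with hf1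
  set f0 : ℝ → ℝ := fun x => (r ^ 2 - x ^ 2) ^ m / (2 ^ m * m.factorial) * Real.cos x with hf0
  set F : ℝ → ℝ := fun x => ((r ^ 2 - x ^ 2) ^ (m + 2) * Real.sin x
      - (2 * ((m : ℝ) + 2)) * (x * (r ^ 2 - x ^ 2) ^ (m + 1) * Real.cos x))
      / (2 ^ (m + 2) * (m + 2).factorial) with hF
  have hfacne : ((m.factorial : ℝ)) ≠ 0 := Nat.cast_ne_zero.mpr m.factorial_ne_zero
  have h2ne : (2 : ℝ) ^ m ≠ 0 := by positivity
  have hderiv : ∀ x ∈ Set.uIcc (0 : ℝ) r,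
      HasDerivAt F (f2 x - c * f1 x + r ^ 2 * f0 x) x := by
    intro x _
    have hb : HasDerivAt (fun y : ℝ => r ^ 2 - y ^ 2) (-(2 * x)) x := by
      simpa using (hasDerivAt_pow 2 x).const_sub (r ^ 2)
    have hp2 := hb.pow (m + 2)
    have hp1 := hb.pow (m + 1)
    have e21 : m + 2 - 1 = m + 1 := rfl
    have e11 : m + 1 - 1 = m := rfl
    rw [e21] at hp2
    rw [e11] at hp1
    have term1 := hp2.mul (Real.hasDerivAt_sin x)
    have inner := ((hasDerivAt_id x).mul hp1).mul (Real.hasDerivAt_cos x)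
    have term2 := inner.const_mul (2 * ((m : ℝ) + 2))
    have total := (term1.sub term2).div_const ((2 : ℝ) ^ (m + 2) * (m + 2).factorial)
    refine HasDerivAt.congr_deriv (f := F) total ?_
    simp only [hf2, hf1, hf0, hc, id_eq, Pi.pow_apply, Pi.mul_apply]
    simp only [Nat.factorial_succ]
    push_cast
    field_simp
    ring
  have hcontf2 : Continuous f2 := by fun_prop
  have hcontf1 : Continuous f1 := by fun_prop
  have hcontf0 : Continuous f0 := by fun_prop
  have hcont : Continuous (fun x => f2 x - c * f1 x + r ^ 2 * f0 x) :=
    (hcontf2.sub (continuous_const.mul hcontf1)).add (continuous_const.mul hcontf0)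
  have key : (∫ x in (0:ℝ)..r, (f2 x - c * f1 x + r ^ 2 * f0 x)) = 0 := by
    rw [intervalIntegral.integral_eq_sub_of_hasDerivAt hderiv
      (hcont.intervalIntegrable 0 r)]
    simp [hF]
  have hi2 : IntervalIntegrable f2 volume 0 r := hcontf2.intervalIntegrable 0 r
  have hi1 : IntervalIntegrable (fun x => c * f1 x) volume 0 r :=
    (continuous_const.mul hcontf1).intervalIntegrable 0 r
  have hi0 : IntervalIntegrable (fun x => r ^ 2 * f0 x) volume 0 r :=
    (continuous_const.mul hcontf0).intervalIntegrable 0 r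
  rw [intervalIntegral.integral_add (hi2.sub hi1) hi0,
      intervalIntegral.integral_sub hi2 hi1,
      intervalIntegral.integral_const_mul, intervalIntegral.integral_const_mul] at key
  have hR2 : R (m + 2) r = ∫ x in (0:ℝ)..r, f2 x := rfl
  have hR1 : R (m + 1) r = ∫ x in (0:ℝ)..r, f1 x := rfl
  have hR0 : R m r = ∫ x in (0:ℝ)..r, f0 x := rfl
  push_cast
  rw [hR2, hR1, hR0, ← hc]
  linarith [key]
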